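/- arXiv:1412.0564 — 6 statements merged into one kernel-verified Lean document; each statement's English description precedes it below -/
import Mathlib

section
/- Let E be a real normed vector space. For smooth sections e₁ = (X₁,α₁), e₂ = (X₂,α₂), e₃ = (X₃,α₃) of the generalized tangent bundle of E, the Dorfman-type bracket satisfies the Leibniz (Jacobi-type) identity: [e₁,[e₂,e₃]] = [[e₁,e₂],e₃] + [e₂,[e₁,e₃]]. -/
/-!
STATEMENT 3: On the generalized tangent bundle of a real normed space E (sections are
pairs (X, α) of a smooth vector field X : E → E and a smooth 1-form α : E → E'), the
Dorfman-type bracket [e₁,e₂] = ([X₁,X₂], L_{X₁}α₂ − ι_{X₂} dα₁) satisfies the Leibniz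
(Jacobi-type) identity [e₁,[e₂,e₃]] = [[e₁,e₂],e₃] + [e₂,[e₁,e₃]].
-/

variable {E : Type*} [NormedAddCommGroup E] [NormedSpace ℝ E]

/-- Lie bracket of vector fields: `[X,Y](x) = DY(x)(X(x)) − DX(x)(Y(x))`. -/
noncomputable def vecBracket (X Y : E → E) : E → E :=
  fun x => fderiv ℝ Y x (X x) - fderiv ℝ X x (Y x)

/-- Lie derivative of a 1-form along a vector field:
`(L_X β)(x)(v) = (Dβ(x)(X(x)))(v) + β(x)(DX(x)(v))`. -/
noncomputable def lieDeriv (X : E → E) (β : E → (E →L[ℝ] ℝ)) : E → (E →L[ℝ] ℝ) :=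
  fun x => fderiv ℝ β x (X x) + (β x).comp (fderiv ℝ X x)

/-- Contraction of the exterior derivative of a 1-form with a vector field:
`(ι_Y dα)(x)(v) = (Dα(x)(Y(x)))(v) − (Dα(x)(v))(Y(x))`. -/
noncomputable def iotaD (Y : E → E) (α : E → (E →L[ℝ] ℝ)) : E → (E →L[ℝ] ℝ) :=
  fun x => fderiv ℝ α x (Y x) - (fderiv ℝ α x).flip (Y x)

/-- Dorfman-type bracket on sections of the generalized tangent bundle:
`[e₁,e₂] = ([X₁,X₂], L_{X₁}α₂ − ι_{X₂} dα₁)`. -/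
noncomputable def dorfman (e₁ e₂ : (E → E) × (E → (E →L[ℝ] ℝ))) :
    (E → E) × (E → (E →L[ℝ] ℝ)) :=
  (vecBracket e₁.1 e₂.1, fun x => lieDeriv e₁.1 e₂.2 x - iotaD e₂.1 e₁.2 x)

section helpers
variable {F : Type*} [NormedAddCommGroup F] [NormedSpace ℝ F]

lemma sd {f : E → F} (hf : ContDiff ℝ (⊤:ℕ∞) f) : Differentiable ℝ f :=
  hf.differentiable (by simp)
lemma sfd {f : E → F} (hf : ContDiff ℝ (⊤:ℕ∞) f) : ContDiff ℝ (⊤:ℕ∞) (fderiv ℝ f) :=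
  (contDiff_infty_iff_fderiv.mp hf).2
lemma symm2 {f : E → F} (hf : ContDiff ℝ (⊤:ℕ∞) f) (x u v : E) :
    fderiv ℝ (fderiv ℝ f) x u v = fderiv ℝ (fderiv ℝ f) x v u :=
  second_derivative_symmetric (fun y => (sd hf y).hasFDerivAt) ((sd (sfd hf) x).hasFDerivAt) u v

lemma fd_capp {c : E → (E →L[ℝ] F)} {g : E → E} {x : E}
    (hc : DifferentiableAt ℝ c x) (hg : DifferentiableAt ℝ g x) (u : E) :
    fderiv ℝ (fun y => c y (g y)) x u = fderiv ℝ c x u (g x) + c x (fderiv ℝ g x u) := by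
  rw [fderiv_clm_apply hc hg]
  simp only [ContinuousLinearMap.add_apply, ContinuousLinearMap.comp_apply,
    ContinuousLinearMap.flip_apply]
  abel

lemma fd_ccomp {β : E → (E →L[ℝ] ℝ)} {X : E → E} {x : E}
    (hβ : DifferentiableAt ℝ β x) (hX : DifferentiableAt ℝ (fderiv ℝ X) x) (u w : E) :
    fderiv ℝ (fun y => (β y).comp (fderiv ℝ X y)) x u w
      = fderiv ℝ β x u (fderiv ℝ X x w) + β x (fderiv ℝ (fderiv ℝ X) x u w) := by
  rw [fderiv_clm_comp hβ hX]
  simp only [ContinuousLinearMap.add_apply, ContinuousLinearMap.comp_apply,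
    ContinuousLinearMap.flip_apply, ContinuousLinearMap.compL_apply]
  abel

noncomputable def flipL : (E →L[ℝ] E →L[ℝ] ℝ) →L[ℝ] (E →L[ℝ] E →L[ℝ] ℝ) :=
  (ContinuousLinearMap.flipₗᵢ ℝ E E ℝ).toLinearIsometry.toContinuousLinearMap

@[simp] lemma flipL_apply (L : E →L[ℝ] E →L[ℝ] ℝ) : flipL L = L.flip := rfl
attribute [irreducible] flipL

lemma smooth_fderiv_flip {α : E → (E →L[ℝ] ℝ)} (hα : ContDiff ℝ (⊤:ℕ∞) α) :
    ContDiff ℝ (⊤:ℕ∞) (fun y => (fderiv ℝ α y).flip) := by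
  have : (fun y => (fderiv ℝ α y).flip) = fun y => flipL (fderiv ℝ α y) := by
    funext y; simp
  rw [this]
  exact contDiff_const.clm_apply (sfd hα)

lemma smooth_lieDeriv {X : E → E} {β : E → (E →L[ℝ] ℝ)}
    (hX : ContDiff ℝ (⊤:ℕ∞) X) (hβ : ContDiff ℝ (⊤:ℕ∞) β) :
    ContDiff ℝ (⊤:ℕ∞) (lieDeriv X β) :=
  ((sfd hβ).clm_apply hX).add (hβ.clm_comp (sfd hX))

lemma smooth_iotaD {Y : E → E} {α : E → (E →L[ℝ] ℝ)}
    (hY : ContDiff ℝ (⊤:ℕ∞) Y) (hα : ContDiff ℝ (⊤:ℕ∞) α) :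
    ContDiff ℝ (⊤:ℕ∞) (iotaD Y α) :=
  ((sfd hα).clm_apply hY).sub ((smooth_fderiv_flip hα).clm_apply hY)

lemma fd_lie {X : E → E} {β : E → (E →L[ℝ] ℝ)}
    (hX : ContDiff ℝ (⊤:ℕ∞) X) (hβ : ContDiff ℝ (⊤:ℕ∞) β) (x u w : E) :
    fderiv ℝ (lieDeriv X β) x u w
      = fderiv ℝ (fderiv ℝ β) x u (X x) w + fderiv ℝ β x (fderiv ℝ X x u) w
        + fderiv ℝ β x u (fderiv ℝ X x w) + β x (fderiv ℝ (fderiv ℝ X) x u w) := by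
  have hA : DifferentiableAt ℝ (fun y => fderiv ℝ β y (X y)) x :=
    (sd (sfd hβ) x).clm_apply (sd hX x)
  have hB : DifferentiableAt ℝ (fun y => (β y).comp (fderiv ℝ X y)) x :=
    (sd hβ x).clm_comp (sd (sfd hX) x)
  have : fderiv ℝ (lieDeriv X β) x
      = fderiv ℝ (fun y => fderiv ℝ β y (X y)) x
        + fderiv ℝ (fun y => (β y).comp (fderiv ℝ X y)) x := by
    rw [show lieDeriv X β = fun y =>
      (fun y => fderiv ℝ β y (X y)) y + (fun y => (β y).comp (fderiv ℝ X y)) y from rfl]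
    exact fderiv_add hA hB
  rw [this]
  simp only [ContinuousLinearMap.add_apply]
  rw [fd_capp (sd (sfd hβ) x) (sd hX x) u]
  rw [fd_ccomp (sd hβ x) (sd (sfd hX) x) u w]
  simp only [ContinuousLinearMap.add_apply]
  abel

lemma fd_iota {Y : E → E} {α : E → (E →L[ℝ] ℝ)}
    (hY : ContDiff ℝ (⊤:ℕ∞) Y) (hα : ContDiff ℝ (⊤:ℕ∞) α) (x u w : E) :
    fderiv ℝ (iotaD Y α) x u w
      = fderiv ℝ (fderiv ℝ α) x u (Y x) w + fderiv ℝ α x (fderiv ℝ Y x u) w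
        - fderiv ℝ (fderiv ℝ α) x u w (Y x) - fderiv ℝ α x w (fderiv ℝ Y x u) := by
  have hA : DifferentiableAt ℝ (fun y => fderiv ℝ α y (Y y)) x :=
    (sd (sfd hα) x).clm_apply (sd hY x)
  have hB : DifferentiableAt ℝ (fun y => (fderiv ℝ α y).flip (Y y)) x :=
    (sd (smooth_fderiv_flip hα) x).clm_apply (sd hY x)
  have h1 : fderiv ℝ (iotaD Y α) x
      = fderiv ℝ (fun y => fderiv ℝ α y (Y y)) x
        - fderiv ℝ (fun y => (fderiv ℝ α y).flip (Y y)) x := by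
    rw [show iotaD Y α = fun y =>
      (fun y => fderiv ℝ α y (Y y)) y - (fun y => (fderiv ℝ α y).flip (Y y)) y from rfl]
    exact fderiv_sub hA hB
  have h2 : fderiv ℝ (fun y => (fderiv ℝ α y).flip (Y y)) x u w
      = fderiv ℝ (fderiv ℝ α) x u w (Y x) + fderiv ℝ α x w (fderiv ℝ Y x u) := by
    have hc : DifferentiableAt ℝ (fun y => (fderiv ℝ α y).flip) x :=
      sd (smooth_fderiv_flip hα) x
    rw [fd_capp hc (sd hY x) u]
    have h3 : fderiv ℝ (fun y => (fderiv ℝ α y).flip) x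
        = flipL.comp (fderiv ℝ (fderiv ℝ α) x) := by
      have : (fun y => (fderiv ℝ α y).flip) = fun y => flipL (fderiv ℝ α y) := by
        funext y; simp
      rw [this]
      have h4 : HasFDerivAt (⇑(flipL (E := E)) ∘ (fderiv ℝ α))
          ((flipL (E := E)).comp (fderiv ℝ (fderiv ℝ α) x)) x := by
        apply HasFDerivAt.comp (𝕜 := ℝ) (F := E →L[ℝ] E →L[ℝ] ℝ) (G := E →L[ℝ] E →L[ℝ] ℝ) x (ContinuousLinearMap.hasFDerivAt _) (sd (sfd hα) x).hasFDerivAt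
      exact h4.fderiv
    rw [h3]
    simp only [ContinuousLinearMap.add_apply, ContinuousLinearMap.comp_apply, flipL_apply,
      ContinuousLinearMap.flip_apply]
  rw [h1]
  simp only [ContinuousLinearMap.sub_apply]
  rw [fd_capp (sd (sfd hα) x) (sd hY x) u, h2]
  simp only [ContinuousLinearMap.add_apply]
  abel

lemma fd_vecBracket {X Y : E → E}
    (hX : ContDiff ℝ (⊤:ℕ∞) X) (hY : ContDiff ℝ (⊤:ℕ∞) Y) (x u : E) :
    fderiv ℝ (vecBracket X Y) x u
      = fderiv ℝ (fderiv ℝ Y) x u (X x) + fderiv ℝ Y x (fderiv ℝ X x u)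
        - fderiv ℝ (fderiv ℝ X) x u (Y x) - fderiv ℝ X x (fderiv ℝ Y x u) := by
  have hA : DifferentiableAt ℝ (fun y => fderiv ℝ Y y (X y)) x :=
    (sd (sfd hY) x).clm_apply (sd hX x)
  have hB : DifferentiableAt ℝ (fun y => fderiv ℝ X y (Y y)) x :=
    (sd (sfd hX) x).clm_apply (sd hY x)
  have h1 : fderiv ℝ (vecBracket X Y) x
      = fderiv ℝ (fun y => fderiv ℝ Y y (X y)) x - fderiv ℝ (fun y => fderiv ℝ X y (Y y)) x := by
    rw [show vecBracket X Y = fun y =>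
      (fun y => fderiv ℝ Y y (X y)) y - (fun y => fderiv ℝ X y (Y y)) y from rfl]
    exact fderiv_sub hA hB
  rw [h1]
  simp only [ContinuousLinearMap.sub_apply]
  rw [fd_capp (sd (sfd hY) x) (sd hX x) u, fd_capp (sd (sfd hX) x) (sd hY x) u]
  abel

end helpers

section masters
variable {X1 X2 X3 : E → E} {α1 α2 α3 : E → (E →L[ℝ] ℝ)}

lemma vec_right (hX1 : ContDiff ℝ (⊤:ℕ∞) X1) (hX2 : ContDiff ℝ (⊤:ℕ∞) X2)
    (hX3 : ContDiff ℝ (⊤:ℕ∞) X3) (x : E) :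
    vecBracket X1 (vecBracket X2 X3) x
      = fderiv ℝ (fderiv ℝ X3) x (X1 x) (X2 x) + fderiv ℝ X3 x (fderiv ℝ X2 x (X1 x))
        - fderiv ℝ (fderiv ℝ X2) x (X1 x) (X3 x) - fderiv ℝ X2 x (fderiv ℝ X3 x (X1 x))
        - fderiv ℝ X1 x (fderiv ℝ X3 x (X2 x)) + fderiv ℝ X1 x (fderiv ℝ X2 x (X3 x)) := by
  have e1 : vecBracket X1 (vecBracket X2 X3) x
      = fderiv ℝ (vecBracket X2 X3) x (X1 x)
        - fderiv ℝ X1 x (fderiv ℝ X3 x (X2 x) - fderiv ℝ X2 x (X3 x)) := rfl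
  rw [e1, fd_vecBracket hX2 hX3 x (X1 x), map_sub]
  abel

lemma vec_left (hX1 : ContDiff ℝ (⊤:ℕ∞) X1) (hX2 : ContDiff ℝ (⊤:ℕ∞) X2)
    (hX3 : ContDiff ℝ (⊤:ℕ∞) X3) (x : E) :
    vecBracket (vecBracket X1 X2) X3 x
      = fderiv ℝ X3 x (fderiv ℝ X2 x (X1 x)) - fderiv ℝ X3 x (fderiv ℝ X1 x (X2 x))
        - fderiv ℝ (fderiv ℝ X2) x (X3 x) (X1 x) - fderiv ℝ X2 x (fderiv ℝ X1 x (X3 x))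
        + fderiv ℝ (fderiv ℝ X1) x (X3 x) (X2 x) + fderiv ℝ X1 x (fderiv ℝ X2 x (X3 x)) := by
  have e1 : vecBracket (vecBracket X1 X2) X3 x
      = fderiv ℝ X3 x (fderiv ℝ X2 x (X1 x) - fderiv ℝ X1 x (X2 x))
        - fderiv ℝ (vecBracket X1 X2) x (X3 x) := rfl
  rw [e1, fd_vecBracket hX1 hX2 x (X3 x), map_sub]
  abel

lemma form_right (hX1 : ContDiff ℝ (⊤:ℕ∞) X1) (hX2 : ContDiff ℝ (⊤:ℕ∞) X2)
    (hX3 : ContDiff ℝ (⊤:ℕ∞) X3) (hα1 : ContDiff ℝ (⊤:ℕ∞) α1)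
    (hα2 : ContDiff ℝ (⊤:ℕ∞) α2) (hα3 : ContDiff ℝ (⊤:ℕ∞) α3) (x w : E) :
    lieDeriv X1 (fun y => lieDeriv X2 α3 y - iotaD X3 α2 y) x w
      - iotaD (vecBracket X2 X3) α1 x w
    = fderiv ℝ (fderiv ℝ α3) x (X1 x) (X2 x) w
      + fderiv ℝ α3 x (fderiv ℝ X2 x (X1 x)) w
      + fderiv ℝ α3 x (X1 x) (fderiv ℝ X2 x w)
      + α3 x (fderiv ℝ (fderiv ℝ X2) x (X1 x) w)
      - fderiv ℝ (fderiv ℝ α2) x (X1 x) (X3 x) w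
      - fderiv ℝ α2 x (fderiv ℝ X3 x (X1 x)) w
      + fderiv ℝ (fderiv ℝ α2) x (X1 x) w (X3 x)
      + fderiv ℝ α2 x w (fderiv ℝ X3 x (X1 x))
      + fderiv ℝ α3 x (X2 x) (fderiv ℝ X1 x w)
      + α3 x (fderiv ℝ X2 x (fderiv ℝ X1 x w))
      - fderiv ℝ α2 x (X3 x) (fderiv ℝ X1 x w)
      + fderiv ℝ α2 x (fderiv ℝ X1 x w) (X3 x)
      - fderiv ℝ α1 x (fderiv ℝ X3 x (X2 x)) w
      + fderiv ℝ α1 x (fderiv ℝ X2 x (X3 x)) w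
      + fderiv ℝ α1 x w (fderiv ℝ X3 x (X2 x))
      - fderiv ℝ α1 x w (fderiv ℝ X2 x (X3 x)) := by
  have hG1 : DifferentiableAt ℝ (lieDeriv X2 α3) x := sd (smooth_lieDeriv hX2 hα3) x
  have hG2 : DifferentiableAt ℝ (iotaD X3 α2) x := sd (smooth_iotaD hX3 hα2) x
  have e1 : lieDeriv X1 (fun y => lieDeriv X2 α3 y - iotaD X3 α2 y) x w
      = fderiv ℝ (fun y => lieDeriv X2 α3 y - iotaD X3 α2 y) x (X1 x) w
        + (lieDeriv X2 α3 x (fderiv ℝ X1 x w) - iotaD X3 α2 x (fderiv ℝ X1 x w)) := rfl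
  have e2 : fderiv ℝ (fun y => lieDeriv X2 α3 y - iotaD X3 α2 y) x
      = fderiv ℝ (lieDeriv X2 α3) x - fderiv ℝ (iotaD X3 α2) x := fderiv_sub hG1 hG2
  have e3 : iotaD (vecBracket X2 X3) α1 x w
      = fderiv ℝ α1 x (fderiv ℝ X3 x (X2 x) - fderiv ℝ X2 x (X3 x)) w
        - fderiv ℝ α1 x w (fderiv ℝ X3 x (X2 x) - fderiv ℝ X2 x (X3 x)) := rfl
  have v1 : lieDeriv X2 α3 x (fderiv ℝ X1 x w)
      = fderiv ℝ α3 x (X2 x) (fderiv ℝ X1 x w)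
        + α3 x (fderiv ℝ X2 x (fderiv ℝ X1 x w)) := rfl
  have v2 : iotaD X3 α2 x (fderiv ℝ X1 x w)
      = fderiv ℝ α2 x (X3 x) (fderiv ℝ X1 x w)
        - fderiv ℝ α2 x (fderiv ℝ X1 x w) (X3 x) := rfl
  rw [e1, e2, e3, v1, v2]
  simp only [ContinuousLinearMap.sub_apply, map_sub]
  rw [fd_lie hX2 hα3 x (X1 x) w, fd_iota hX3 hα2 x (X1 x) w]
  abel

lemma form_left (hX1 : ContDiff ℝ (⊤:ℕ∞) X1) (hX2 : ContDiff ℝ (⊤:ℕ∞) X2)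
    (hX3 : ContDiff ℝ (⊤:ℕ∞) X3) (hα1 : ContDiff ℝ (⊤:ℕ∞) α1)
    (hα2 : ContDiff ℝ (⊤:ℕ∞) α2) (hα3 : ContDiff ℝ (⊤:ℕ∞) α3) (x w : E) :
    lieDeriv (vecBracket X1 X2) α3 x w
      - iotaD X3 (fun y => lieDeriv X1 α2 y - iotaD X2 α1 y) x w
    = fderiv ℝ α3 x (fderiv ℝ X2 x (X1 x)) w
      - fderiv ℝ α3 x (fderiv ℝ X1 x (X2 x)) w
      + α3 x (fderiv ℝ (fderiv ℝ X2) x w (X1 x))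
      + α3 x (fderiv ℝ X2 x (fderiv ℝ X1 x w))
      - α3 x (fderiv ℝ (fderiv ℝ X1) x w (X2 x))
      - α3 x (fderiv ℝ X1 x (fderiv ℝ X2 x w))
      - fderiv ℝ (fderiv ℝ α2) x (X3 x) (X1 x) w
      - fderiv ℝ α2 x (fderiv ℝ X1 x (X3 x)) w
      - fderiv ℝ α2 x (X3 x) (fderiv ℝ X1 x w)
      - α2 x (fderiv ℝ (fderiv ℝ X1) x (X3 x) w)
      + fderiv ℝ (fderiv ℝ α1) x (X3 x) (X2 x) w
      + fderiv ℝ α1 x (fderiv ℝ X2 x (X3 x)) w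
      - fderiv ℝ (fderiv ℝ α1) x (X3 x) w (X2 x)
      - fderiv ℝ α1 x w (fderiv ℝ X2 x (X3 x))
      + fderiv ℝ (fderiv ℝ α2) x w (X1 x) (X3 x)
      + fderiv ℝ α2 x (fderiv ℝ X1 x w) (X3 x)
      + fderiv ℝ α2 x w (fderiv ℝ X1 x (X3 x))
      + α2 x (fderiv ℝ (fderiv ℝ X1) x w (X3 x))
      - fderiv ℝ (fderiv ℝ α1) x w (X2 x) (X3 x)
      - fderiv ℝ α1 x (fderiv ℝ X2 x w) (X3 x)
      + fderiv ℝ (fderiv ℝ α1) x w (X3 x) (X2 x)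
      + fderiv ℝ α1 x (X3 x) (fderiv ℝ X2 x w) := by
  have hB1 : DifferentiableAt ℝ (lieDeriv X1 α2) x := sd (smooth_lieDeriv hX1 hα2) x
  have hB2 : DifferentiableAt ℝ (iotaD X2 α1) x := sd (smooth_iotaD hX2 hα1) x
  have e1 : lieDeriv (vecBracket X1 X2) α3 x w
      = fderiv ℝ α3 x (fderiv ℝ X2 x (X1 x) - fderiv ℝ X1 x (X2 x)) w
        + α3 x (fderiv ℝ (vecBracket X1 X2) x w) := rfl
  have e2 : iotaD X3 (fun y => lieDeriv X1 α2 y - iotaD X2 α1 y) x w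
      = fderiv ℝ (fun y => lieDeriv X1 α2 y - iotaD X2 α1 y) x (X3 x) w
        - fderiv ℝ (fun y => lieDeriv X1 α2 y - iotaD X2 α1 y) x w (X3 x) := rfl
  have e3 : fderiv ℝ (fun y => lieDeriv X1 α2 y - iotaD X2 α1 y) x
      = fderiv ℝ (lieDeriv X1 α2) x - fderiv ℝ (iotaD X2 α1) x := fderiv_sub hB1 hB2
  rw [e1, e2, e3, fd_vecBracket hX1 hX2 x w]
  simp only [ContinuousLinearMap.sub_apply, map_sub, map_add]
  rw [fd_lie hX1 hα2 x (X3 x) w, fd_iota hX2 hα1 x (X3 x) w,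
      fd_lie hX1 hα2 x w (X3 x), fd_iota hX2 hα1 x w (X3 x)]
  abel

end masters


theorem dorfman_leibniz (e₁ e₂ e₃ : (E → E) × (E → (E →L[ℝ] ℝ)))
    (h₁ : ContDiff ℝ (⊤ : ℕ∞) e₁.1) (h₁' : ContDiff ℝ (⊤ : ℕ∞) e₁.2)
    (h₂ : ContDiff ℝ (⊤ : ℕ∞) e₂.1) (h₂' : ContDiff ℝ (⊤ : ℕ∞) e₂.2)
    (h₃ : ContDiff ℝ (⊤ : ℕ∞) e₃.1) (h₃' : ContDiff ℝ (⊤ : ℕ∞) e₃.2) :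
    dorfman e₁ (dorfman e₂ e₃) = dorfman (dorfman e₁ e₂) e₃ + dorfman e₂ (dorfman e₁ e₃) := by
  obtain ⟨X1, α1⟩ := e₁
  obtain ⟨X2, α2⟩ := e₂
  obtain ⟨X3, α3⟩ := e₃
  dsimp only at h₁ h₁' h₂ h₂' h₃ h₃'
  simp only [dorfman, Prod.mk_add_mk, Prod.mk.injEq]
  constructor
  · funext x
    simp only [Pi.add_apply]
    rw [vec_right h₁ h₂ h₃ x, vec_left h₁ h₂ h₃ x, vec_right h₂ h₁ h₃ x]
    rw [symm2 h₃ x (X2 x) (X1 x), symm2 h₂ x (X3 x) (X1 x), symm2 h₁ x (X3 x) (X2 x)]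
    abel
  · funext x
    refine ContinuousLinearMap.ext fun w => ?_
    simp only [Pi.add_apply, ContinuousLinearMap.add_apply, ContinuousLinearMap.sub_apply]
    rw [form_right h₁ h₂ h₃ h₁' h₂' h₃' x w, form_left h₁ h₂ h₃ h₁' h₂' h₃' x w,
        form_right h₂ h₁ h₃ h₂' h₁' h₃' x w]
    rw [symm2 h₃' x (X2 x) (X1 x), symm2 h₂ x w (X1 x), symm2 h₂' x (X3 x) (X1 x),
        symm2 h₂' x w (X1 x), symm2 h₁ x w (X2 x), symm2 h₁' x (X3 x) (X2 x),
        symm2 h₁' x w (X3 x), symm2 h₁ x w (X3 x), symm2 h₁' x w (X2 x)]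
    abel
end

section
/- Let E be a real normed vector space. For smooth sections e₁ = (X₁,α₁), e₂ = (X₂,α₂), e₃ = (X₃,α₃) of the generalized tangent bundle of E, the anchor and the pairing are compatible with the Dorfman-type bracket: for all x ∈ E, D(Θ(e₂,e₃))(x)(X₁(x)) = Θ([e₁,e₂], e₃)(x) + Θ(e₂, [e₁,e₃])(x). -/
/-!
STATEMENT 4: On the generalized tangent bundle of a real normed space E, the anchor
(projection to the vector-field component) and the pairing
Θ(e₁,e₂)(x) = α₁(x)(X₂(x)) + α₂(x)(X₁(x)) are compatible with the Dorfman-type bracket: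
D(Θ(e₂,e₃))(x)(X₁(x)) = Θ([e₁,e₂], e₃)(x) + Θ(e₂, [e₁,e₃])(x).
-/

variable {E : Type*} [NormedAddCommGroup E] [NormedSpace ℝ E]

/-- The pairing `Θ(e₁,e₂)(x) = α₁(x)(X₂(x)) + α₂(x)(X₁(x))`. -/
def pairingTheta (e₁ e₂ : (E → E) × (E → (E →L[ℝ] ℝ))) : E → ℝ :=
  fun x => e₁.2 x (e₂.1 x) + e₂.2 x (e₁.1 x)

theorem dorfman_anchor_pairing (e₁ e₂ e₃ : (E → E) × (E → (E →L[ℝ] ℝ)))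
    (h₁ : ContDiff ℝ (⊤ : ℕ∞) e₁.1) (h₁' : ContDiff ℝ (⊤ : ℕ∞) e₁.2)
    (h₂ : ContDiff ℝ (⊤ : ℕ∞) e₂.1) (h₂' : ContDiff ℝ (⊤ : ℕ∞) e₂.2)
    (h₃ : ContDiff ℝ (⊤ : ℕ∞) e₃.1) (h₃' : ContDiff ℝ (⊤ : ℕ∞) e₃.2) :
    ∀ x : E, fderiv ℝ (pairingTheta e₂ e₃) x (e₁.1 x) =
      pairingTheta (dorfman e₁ e₂) e₃ x + pairingTheta e₂ (dorfman e₁ e₃) x := by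
  intro x
  have d1 : DifferentiableAt ℝ e₂.1 x := (h₂.differentiable (by simp)).differentiableAt
  have d2 : DifferentiableAt ℝ e₂.2 x := (h₂'.differentiable (by simp)).differentiableAt
  have d3 : DifferentiableAt ℝ e₃.1 x := (h₃.differentiable (by simp)).differentiableAt
  have d4 : DifferentiableAt ℝ e₃.2 x := (h₃'.differentiable (by simp)).differentiableAt
  have hΘ : fderiv ℝ (pairingTheta e₂ e₃) x =
      fderiv ℝ (fun y => e₂.2 y (e₃.1 y)) x + fderiv ℝ (fun y => e₃.2 y (e₂.1 y)) x := by
    rw [← fderiv_fun_add (d2.clm_apply d3) (d4.clm_apply d1)]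
    rfl
  rw [hΘ, fderiv_clm_apply d2 d3, fderiv_clm_apply d4 d1]
  simp only [pairingTheta, dorfman, vecBracket, lieDeriv, iotaD,
    ContinuousLinearMap.add_apply, ContinuousLinearMap.sub_apply,
    ContinuousLinearMap.coe_comp', Function.comp_apply, ContinuousLinearMap.flip_apply,
    map_sub]
  ring
end

section
/- Let E be a real normed vector space. For smooth sections e₁ = (X₁,α₁), e₂ = (X₂,α₂) of the generalized tangent bundle of E, the symmetrization of the Dorfman-type bracket equals the exterior derivative of the pairing: [e₁,e₂] + [e₂,e₁] = (0, d(Θ(e₁,e₂))), i.e. the vector-field components cancel and the 1-form components add up to x ↦ D(Θ(e₁,e₂))(x). -/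
/-!
STATEMENT 5: On the generalized tangent bundle of a real normed space E, the
symmetrization of the Dorfman-type bracket equals the exterior derivative of the pairing:
[e₁,e₂] + [e₂,e₁] = (0, d(Θ(e₁,e₂))).
-/

variable {E : Type*} [NormedAddCommGroup E] [NormedSpace ℝ E]

theorem dorfman_symmetrization (e₁ e₂ : (E → E) × (E → (E →L[ℝ] ℝ)))
    (h₁ : ContDiff ℝ (⊤ : ℕ∞) e₁.1) (h₁' : ContDiff ℝ (⊤ : ℕ∞) e₁.2)
    (h₂ : ContDiff ℝ (⊤ : ℕ∞) e₂.1) (h₂' : ContDiff ℝ (⊤ : ℕ∞) e₂.2) :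
    dorfman e₁ e₂ + dorfman e₂ e₁ =
      ((0 : E → E), fun x => fderiv ℝ (pairingTheta e₁ e₂) x) := by
  obtain ⟨X₁, α₁⟩ := e₁
  obtain ⟨X₂, α₂⟩ := e₂
  simp only at h₁ h₁' h₂ h₂' ⊢
  refine Prod.ext ?_ ?_
  · funext x
    simp [dorfman, vecBracket]
  · funext x
    have d₁ : DifferentiableAt ℝ X₁ x := (h₁.differentiable (by simp)) x
    have d₂ : DifferentiableAt ℝ X₂ x := (h₂.differentiable (by simp)) x
    have d₁' : DifferentiableAt ℝ α₁ x := (h₁'.differentiable (by simp)) x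
    have d₂' : DifferentiableAt ℝ α₂ x := (h₂'.differentiable (by simp)) x
    have key : fderiv ℝ (pairingTheta (X₁, α₁) (X₂, α₂)) x =
        ((α₁ x).comp (fderiv ℝ X₂ x) + (fderiv ℝ α₁ x).flip (X₂ x)) +
        ((α₂ x).comp (fderiv ℝ X₁ x) + (fderiv ℝ α₂ x).flip (X₁ x)) := by
      have : fderiv ℝ (pairingTheta (X₁, α₁) (X₂, α₂)) x =
          fderiv ℝ (fun y => α₁ y (X₂ y)) x + fderiv ℝ (fun y => α₂ y (X₁ y)) x := by
        unfold pairingTheta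
        exact fderiv_add (d₁'.clm_apply d₂) (d₂'.clm_apply d₁)
      rw [this, fderiv_clm_apply d₁' d₂, fderiv_clm_apply d₂' d₁]
    simp only [dorfman, Pi.add_apply, lieDeriv, iotaD]
    rw [key]
    ext v
    simp
    ring
end

section
/- Let E be a real normed vector space. For smooth sections e₁ = (X₁,α₁), e₂ = (X₂,α₂) of the generalized tangent bundle of E and a smooth function f : E → ℝ, the Courant bracket satisfies the anomalous Leibniz rule: ⟦e₁, f·e₂⟧ = f·⟦e₁,e₂⟧ + (λ(e₁)f)·e₂ − (1/2)·Θ(e₁,e₂)·(0, df), where f·(X,α) denotes pointwise scaling of both components, (λ(e₁)f)(x) = Df(x)(X₁(x)), and (0, df) is the section with zero vector-field component and 1-form component x ↦ Df(x). -/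
/-!
STATEMENT 6: On the generalized tangent bundle of a real normed space E, the Courant
bracket ⟦e₁,e₂⟧ = ([X₁,X₂], L_{X₁}α₂ − L_{X₂}α₁ + (1/2) d(ι_{X₂}α₁ − ι_{X₁}α₂)) satisfies
the anomalous Leibniz rule
⟦e₁, f·e₂⟧ = f·⟦e₁,e₂⟧ + (λ(e₁)f)·e₂ − (1/2)·Θ(e₁,e₂)·(0, df).
-/

variable {E : Type*} [NormedAddCommGroup E] [NormedSpace ℝ E]

/-- The Courant bracket
`⟦e₁,e₂⟧ = ([X₁,X₂], L_{X₁}α₂ − L_{X₂}α₁ + (1/2) d(ι_{X₂}α₁ − ι_{X₁}α₂))`. -/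
noncomputable def courant (e₁ e₂ : (E → E) × (E → (E →L[ℝ] ℝ))) :
    (E → E) × (E → (E →L[ℝ] ℝ)) :=
  (vecBracket e₁.1 e₂.1,
    fun x => lieDeriv e₁.1 e₂.2 x - lieDeriv e₂.1 e₁.2 x +
      (1 / 2 : ℝ) • fderiv ℝ (fun y => e₁.2 y (e₂.1 y) - e₂.2 y (e₁.1 y)) x)

/-- Pointwise scaling of a section of the generalized tangent bundle by a function. -/
noncomputable def smulSec (g : E → ℝ) (e : (E → E) × (E → (E →L[ℝ] ℝ))) :
    (E → E) × (E → (E →L[ℝ] ℝ)) :=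
  (fun x => g x • e.1 x, fun x => g x • e.2 x)

theorem courant_leibniz_rule (e₁ e₂ : (E → E) × (E → (E →L[ℝ] ℝ))) (f : E → ℝ)
    (h₁ : ContDiff ℝ (⊤ : ℕ∞) e₁.1) (h₁' : ContDiff ℝ (⊤ : ℕ∞) e₁.2)
    (h₂ : ContDiff ℝ (⊤ : ℕ∞) e₂.1) (h₂' : ContDiff ℝ (⊤ : ℕ∞) e₂.2)
    (hf : ContDiff ℝ (⊤ : ℕ∞) f) :
    courant e₁ (smulSec f e₂) =
      smulSec f (courant e₁ e₂) +
      smulSec (fun x => fderiv ℝ f x (e₁.1 x)) e₂ -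
      smulSec (fun x => (1 / 2 : ℝ) * pairingTheta e₁ e₂ x)
        ((0 : E → E), fun x => fderiv ℝ f x) := by
  obtain ⟨X₁, α₁⟩ := e₁
  obtain ⟨X₂, α₂⟩ := e₂
  simp only at h₁ h₁' h₂ h₂'
  have dX₁ : Differentiable ℝ X₁ := h₁.differentiable (by simp)
  have dα₁ : Differentiable ℝ α₁ := h₁'.differentiable (by simp)
  have dX₂ : Differentiable ℝ X₂ := h₂.differentiable (by simp)
  have dα₂ : Differentiable ℝ α₂ := h₂'.differentiable (by simp)
  have df : Differentiable ℝ f := hf.differentiable (by simp)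
  have key : ∀ x, fderiv ℝ (fun y => α₁ y (f y • X₂ y) - (f y • α₂ y) (X₁ y)) x
      = f x • fderiv ℝ (fun y => α₁ y (X₂ y) - α₂ y (X₁ y)) x
        + (α₁ x (X₂ x) - α₂ x (X₁ x)) • fderiv ℝ f x := by
    intro x
    have heq : (fun y => α₁ y (f y • X₂ y) - (f y • α₂ y) (X₁ y))
        = fun y => f y * (α₁ y (X₂ y) - α₂ y (X₁ y)) := by
      funext y
      simp [ContinuousLinearMap.smul_apply, mul_sub, smul_eq_mul, mul_comm]
    rw [heq, fderiv_fun_mul (df x) (((dα₁ x).clm_apply (dX₂ x)).fun_sub ((dα₂ x).clm_apply (dX₁ x)))]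
  refine Prod.ext (funext fun x => ?_) (funext fun x => ?_)
  · simp only [courant, vecBracket, smulSec, pairingTheta, Prod.fst_add, Prod.fst_sub,
      Pi.add_apply, Pi.sub_apply]
    rw [fderiv_fun_smul (df x) (dX₂ x)]
    simp only [ContinuousLinearMap.add_apply, ContinuousLinearMap.smul_apply,
      ContinuousLinearMap.smulRight_apply, map_smul, Pi.zero_apply, smul_zero, sub_zero,
      smul_sub]
    module
  · simp only [courant, smulSec, lieDeriv, pairingTheta, Prod.snd_add, Prod.snd_sub,
      Pi.add_apply, Pi.sub_apply]
    rw [key x, fderiv_fun_smul (df x) (dα₂ x), fderiv_fun_smul (df x) (dX₂ x)]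
    ext v
    simp [ContinuousLinearMap.smul_apply, ContinuousLinearMap.comp_apply,
      ContinuousLinearMap.add_apply, ContinuousLinearMap.sub_apply,
      ContinuousLinearMap.smulRight_apply, map_smul, smul_eq_mul]
    ring
end

section
/- Let E be a real normed vector space and let e₁, e₂, e₃ be smooth sections of the generalized tangent bundle of E. Suppose that Θ(e_i, e_j) vanishes identically for all i, j ∈ {1,2,3} and that Θ(⟦e_i, e_j⟧, e_k) vanishes identically for all i, j, k ∈ {1,2,3}. Then the Courant bracket satisfies the Jacobi identity on this triple: ⟦⟦e₁,e₂⟧, e₃⟧ + ⟦⟦e₂,e₃⟧, e₁⟧ + ⟦⟦e₃,e₁⟧, e₂⟧ = 0. In particular, the restriction of the Courant bracket to sections of a Dirac structure (an isotropic subbundle closed under the bracket) yields a Lie bracket. -/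
/-!
STATEMENT 7: On the generalized tangent bundle of a real normed space E, if the pairings
Θ(eᵢ,eⱼ) and Θ(⟦eᵢ,eⱼ⟧,e_k) vanish identically on a triple of smooth sections (as happens
for sections of a Dirac structure), then the Courant bracket satisfies the Jacobi identity
⟦⟦e₁,e₂⟧,e₃⟧ + ⟦⟦e₂,e₃⟧,e₁⟧ + ⟦⟦e₃,e₁⟧,e₂⟧ = 0 on that triple.
-/

variable {E : Type*} [NormedAddCommGroup E] [NormedSpace ℝ E]

set_option maxHeartbeats 1000000

-- auxiliary
noncomputable def dorfForm (X : E → E) (α : E → (E →L[ℝ] ℝ)) (Y : E → E)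
    (β : E → (E →L[ℝ] ℝ)) : E → (E →L[ℝ] ℝ) :=
  fun x => fderiv ℝ β x (X x) + (β x).comp (fderiv ℝ X x)
    - fderiv ℝ α x (Y x) + (fderiv ℝ α x).flip (Y x)

noncomputable def dorf (e f : (E → E) × (E → (E →L[ℝ] ℝ))) :
    (E → E) × (E → (E →L[ℝ] ℝ)) :=
  (vecBracket e.1 f.1, dorfForm e.1 e.2 f.1 f.2)

local notation "SM" => ContDiff ℝ (⊤ : ℕ∞)

lemma contDiff_fderiv {F : Type*} [NormedAddCommGroup F] [NormedSpace ℝ F]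
    {f : E → F} (hf : SM f) : SM (fderiv ℝ f) :=
  hf.fderiv_right (by exact_mod_cast le_top)

lemma diffAt {F : Type*} [NormedAddCommGroup F] [NormedSpace ℝ F]
    {f : E → F} (hf : SM f) (x : E) : DifferentiableAt ℝ f x :=
  (hf.differentiable (by simp)).differentiableAt

lemma fderiv_constL_comp {F G : Type*} [NormedAddCommGroup F] [NormedSpace ℝ F]
    [NormedAddCommGroup G] [NormedSpace ℝ G] (L : F →L[ℝ] G) {f : E → F} {x : E}
    (hf : DifferentiableAt ℝ f x) :
    fderiv ℝ (fun y => L (f y)) x = L.comp (fderiv ℝ f x) :=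
  (L.hasFDerivAt.comp x hf.hasFDerivAt).fderiv

noncomputable def appL (E : Type*) [NormedAddCommGroup E] [NormedSpace ℝ E] :
    E →L[ℝ] ((E →L[ℝ] ℝ) →L[ℝ] ℝ) := ContinuousLinearMap.apply ℝ ℝ

@[simp] lemma appL_apply (w : E) (L : E →L[ℝ] ℝ) : appL E w L = L w := rfl

lemma hasFDerivAt_appL_comp {x : E} (Y : E → E) (hY : DifferentiableAt ℝ Y x) :
    HasFDerivAt (fun y => appL E (Y y)) ((appL E).comp (fderiv ℝ Y x)) x := by
  have key : ∀ {G : Type _} [NormedAddCommGroup G] [NormedSpace ℝ G] (L : E →L[ℝ] G),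
      HasFDerivAt (fun y => L (Y y)) (L.comp (fderiv ℝ Y x)) x :=
    fun L => L.hasFDerivAt.comp x hY.hasFDerivAt
  exact key (G := (E →L[ℝ] ℝ) →L[ℝ] ℝ) (appL E)

lemma contDiff_appL_comp (Y : E → E) (hY : ContDiff ℝ (⊤:ℕ∞) Y) :
    ContDiff ℝ (⊤:ℕ∞) (fun y => appL E (Y y)) := by
  fun_prop

lemma flip_apply_eq (α : E → (E →L[ℝ] ℝ)) (Y : E → E) :
    (fun y => (fderiv ℝ α y).flip (Y y)) =
      fun y => (appL E (Y y)).comp (fderiv ℝ α y) := by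
  funext y; ext v
  simp

lemma smooth_vecBracket {X Y : E → E} (hX : SM X) (hY : SM Y) : SM (vecBracket X Y) :=
  ((contDiff_fderiv hY).clm_apply hX).sub ((contDiff_fderiv hX).clm_apply hY)

lemma smooth_dorfForm {X Y : E → E} {α β : E → (E →L[ℝ] ℝ)}
    (hX : SM X) (hα : SM α) (hY : SM Y) (hβ : SM β) : SM (dorfForm X α Y β) := by
  have h4 : SM (fun y => (fderiv ℝ α y).flip (Y y)) := by
    rw [flip_apply_eq]
    exact (contDiff_appL_comp Y hY).clm_comp (contDiff_fderiv hα)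
  exact ((((contDiff_fderiv hβ).clm_apply hX).add (hβ.clm_comp (contDiff_fderiv hX))).sub
    ((contDiff_fderiv hα).clm_apply hY)).add h4

section masters
variable {X Y Z : E → E} {α β γ : E → (E →L[ℝ] ℝ)} {x u v : E}

lemma master_vec (hX : SM X) (hY : SM Y) (x u : E) :
    fderiv ℝ (vecBracket X Y) x u =
      fderiv ℝ (fderiv ℝ Y) x u (X x) + fderiv ℝ Y x (fderiv ℝ X x u)
      - fderiv ℝ (fderiv ℝ X) x u (Y x) - fderiv ℝ X x (fderiv ℝ Y x u) := by
  have dX := diffAt hX x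
  have dY := diffAt hY x
  have dX' := diffAt (contDiff_fderiv hX) x
  have dY' := diffAt (contDiff_fderiv hY) x
  have h : fderiv ℝ (vecBracket X Y) x =
      fderiv ℝ (fun y => fderiv ℝ Y y (X y)) x - fderiv ℝ (fun y => fderiv ℝ X y (Y y)) x := by
    unfold vecBracket
    exact fderiv_sub (dY'.clm_apply dX) (dX'.clm_apply dY)
  rw [h, fderiv_clm_apply dY' dX, fderiv_clm_apply dX' dY]
  simp only [ContinuousLinearMap.sub_apply, ContinuousLinearMap.add_apply,
    ContinuousLinearMap.comp_apply, ContinuousLinearMap.flip_apply]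
  abel

lemma master_form (hX : SM X) (hα : SM α) (hY : SM Y) (hβ : SM β) (x u v : E) :
    fderiv ℝ (dorfForm X α Y β) x u v =
      fderiv ℝ (fderiv ℝ β) x u (X x) v + fderiv ℝ β x (fderiv ℝ X x u) v
      + fderiv ℝ β x u (fderiv ℝ X x v) + β x (fderiv ℝ (fderiv ℝ X) x u v)
      - fderiv ℝ (fderiv ℝ α) x u (Y x) v - fderiv ℝ α x (fderiv ℝ Y x u) v
      + fderiv ℝ (fderiv ℝ α) x u v (Y x) + fderiv ℝ α x v (fderiv ℝ Y x u) := by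
  have dX := diffAt hX x
  have dY := diffAt hY x
  have dα := diffAt hα x
  have dβ := diffAt hβ x
  have dX' := diffAt (contDiff_fderiv hX) x
  have dY' := diffAt (contDiff_fderiv hY) x
  have dα' := diffAt (contDiff_fderiv hα) x
  have dβ' := diffAt (contDiff_fderiv hβ) x
  have d1 : DifferentiableAt ℝ (fun y => fderiv ℝ β y (X y)) x := dβ'.clm_apply dX
  have d2 : DifferentiableAt ℝ (fun y => (β y).comp (fderiv ℝ X y)) x := dβ.clm_comp dX'
  have d3 : DifferentiableAt ℝ (fun y => fderiv ℝ α y (Y y)) x := dα'.clm_apply dY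
  have dapp : DifferentiableAt ℝ (fun y => appL E (Y y)) x :=
    (hasFDerivAt_appL_comp Y dY).differentiableAt
  have d4 : DifferentiableAt ℝ (fun y => (fderiv ℝ α y).flip (Y y)) x := by
    rw [flip_apply_eq]
    exact dapp.clm_comp dα'
  have h : fderiv ℝ (dorfForm X α Y β) x =
      ((fderiv ℝ (fun y => fderiv ℝ β y (X y)) x
        + fderiv ℝ (fun y => (β y).comp (fderiv ℝ X y)) x)
        - fderiv ℝ (fun y => fderiv ℝ α y (Y y)) x)
        + fderiv ℝ (fun y => (fderiv ℝ α y).flip (Y y)) x := by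
    unfold dorfForm
    rw [fderiv_fun_add ((d1.fun_add d2).fun_sub d3) d4, fderiv_fun_sub (d1.fun_add d2) d3, fderiv_fun_add d1 d2]
  have happ : fderiv ℝ (fun y => appL E (Y y)) x
      = (appL E).comp (fderiv ℝ Y x) :=
    (hasFDerivAt_appL_comp Y dY).fderiv
  rw [h, fderiv_clm_apply dβ' dX, fderiv_clm_comp dβ dX', fderiv_clm_apply dα' dY,
    flip_apply_eq, fderiv_clm_comp dapp dα', happ]
  simp only [ContinuousLinearMap.add_apply, ContinuousLinearMap.sub_apply,
    ContinuousLinearMap.comp_apply, ContinuousLinearMap.flip_apply,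
    ContinuousLinearMap.compL_apply, appL_apply]
  abel

end masters

@[simp] lemma vecBracket_apply (X Y : E → E) (x : E) :
    vecBracket X Y x = fderiv ℝ Y x (X x) - fderiv ℝ X x (Y x) := rfl

lemma schwarz {F : Type*} [NormedAddCommGroup F] [NormedSpace ℝ F]
    {f : E → F} (hf : SM f) (x u v : E) :
    fderiv ℝ (fderiv ℝ f) x u v = fderiv ℝ (fderiv ℝ f) x v u :=
  (hf.contDiffAt.isSymmSndFDerivAt (by rw [minSmoothness_of_isRCLikeNormedField]; exact ENat.LEInfty.out)).eq u v

lemma leibniz_vec {X Y Z : E → E} (hX : SM X) (hY : SM Y) (hZ : SM Z) :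
    vecBracket X (vecBracket Y Z) =
      vecBracket (vecBracket X Y) Z + vecBracket Y (vecBracket X Z) := by
  funext x
  simp only [Pi.add_apply, vecBracket_apply, master_vec hY hZ, master_vec hX hY,
    master_vec hX hZ, map_sub, map_add]
  rw [schwarz hZ x (X x) (Y x), schwarz hY x (X x) (Z x), schwarz hX x (Z x) (Y x)]
  abel

@[simp] lemma dorfForm_apply (X : E → E) (α : E → (E →L[ℝ] ℝ)) (Y : E → E)
    (β : E → (E →L[ℝ] ℝ)) (x : E) :
    dorfForm X α Y β x = fderiv ℝ β x (X x) + (β x).comp (fderiv ℝ X x)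
      - fderiv ℝ α x (Y x) + (fderiv ℝ α x).flip (Y x) := rfl

lemma leibniz_form {X Y Z : E → E} {α β γ : E → (E →L[ℝ] ℝ)}
    (hX : SM X) (hα : SM α) (hY : SM Y) (hβ : SM β) (hZ : SM Z) (hγ : SM γ) :
    dorfForm X α (vecBracket Y Z) (dorfForm Y β Z γ) =
      dorfForm (vecBracket X Y) (dorfForm X α Y β) Z γ
        + dorfForm Y β (vecBracket X Z) (dorfForm X α Z γ) := by
  funext x; ext v
  simp only [Pi.add_apply, dorfForm_apply, vecBracket_apply,
    master_form hY hβ hZ hγ, master_form hX hα hY hβ, master_form hX hα hZ hγ,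
    master_vec hX hY, master_vec hX hZ, master_vec hY hZ,
    ContinuousLinearMap.add_apply, ContinuousLinearMap.sub_apply,
    ContinuousLinearMap.comp_apply, ContinuousLinearMap.flip_apply, map_add, map_sub]
  have s1 := DFunLike.congr_fun (schwarz hγ x (X x) (Y x)) v
  have s2 := DFunLike.congr_fun (schwarz hβ x (X x) (Z x)) v
  have s3 := DFunLike.congr_fun (schwarz hβ x (X x) v) (Z x)
  have s4 := DFunLike.congr_fun (schwarz hα x (Z x) (Y x)) v
  have s5 := DFunLike.congr_fun (schwarz hα x (Z x) v) (Y x)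
  have s6 := DFunLike.congr_fun (schwarz hα x v (Y x)) (Z x)
  have s7 := congrArg (fun w => γ x w) (schwarz hY x (X x) v)
  have s8 := congrArg (fun w => γ x w) (schwarz hX x (Y x) v)
  have s9 := congrArg (fun w => β x w) (schwarz hX x (Z x) v)
  linarith [s1, s2, s3, s4, s5, s6, s7, s8, s9]

lemma dorf_leibniz {a b c : (E → E) × (E → (E →L[ℝ] ℝ))}
    (ha1 : SM a.1) (ha2 : SM a.2) (hb1 : SM b.1) (hb2 : SM b.2)
    (hc1 : SM c.1) (hc2 : SM c.2) :
    dorf a (dorf b c) = dorf (dorf a b) c + dorf b (dorf a c) := by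
  have h1 := leibniz_vec ha1 hb1 hc1
  have h2 := leibniz_form ha1 ha2 hb1 hb2 hc1 hc2
  unfold dorf
  dsimp only
  rw [Prod.mk_add_mk]
  exact Prod.mk.injEq _ _ _ _ ▸ ⟨h1, h2⟩

lemma courant_eq_dorf {e f : (E → E) × (E → (E →L[ℝ] ℝ))}
    (he1 : SM e.1) (he2 : SM e.2) (hf1 : SM f.1) (hf2 : SM f.2)
    (h : ∀ x, pairingTheta e f x = 0) : courant e f = dorf e f := by
  unfold courant dorf
  refine Prod.ext rfl ?_
  dsimp only
  funext x
  have hfun : (fun y => e.2 y (f.1 y) - f.2 y (e.1 y))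
      = fun y => (2:ℝ) * (e.2 y (f.1 y)) := by
    funext y
    have := h y
    simp only [pairingTheta] at this
    linarith
  have d1 : DifferentiableAt ℝ (fun y => e.2 y (f.1 y)) x :=
    (diffAt he2 x).clm_apply (diffAt hf1 x)
  rw [hfun, fderiv_const_mul d1 2, smul_smul]
  norm_num
  rw [fderiv_clm_apply (diffAt he2 x) (diffAt hf1 x)]
  ext v
  simp only [lieDeriv, dorfForm_apply, ContinuousLinearMap.add_apply,
    ContinuousLinearMap.sub_apply, ContinuousLinearMap.comp_apply,
    ContinuousLinearMap.flip_apply]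
  ring

lemma dorf_skew {e f : (E → E) × (E → (E →L[ℝ] ℝ))}
    (he1 : SM e.1) (he2 : SM e.2) (hf1 : SM f.1) (hf2 : SM f.2)
    (h : ∀ x, pairingTheta e f x = 0) : dorf f e = - dorf e f := by
  unfold dorf
  rw [Prod.neg_mk]
  refine Prod.ext ?_ ?_ <;> dsimp only
  · funext x
    simp only [vecBracket_apply, Pi.neg_apply, neg_sub]
  · funext x
    have hz : (fun y => e.2 y (f.1 y) + f.2 y (e.1 y)) = (fun _ => (0:ℝ)) :=
      funext fun y => h y
    have d1 : DifferentiableAt ℝ (fun y => e.2 y (f.1 y)) x :=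
      (diffAt he2 x).clm_apply (diffAt hf1 x)
    have d2 : DifferentiableAt ℝ (fun y => f.2 y (e.1 y)) x :=
      (diffAt hf2 x).clm_apply (diffAt he1 x)
    have k1 : fderiv ℝ (fun y => e.2 y (f.1 y) + f.2 y (e.1 y)) x = 0 := by
      rw [hz]
      exact fderiv_const_apply 0
    rw [fderiv_fun_add d1 d2, fderiv_clm_apply (diffAt he2 x) (diffAt hf1 x),
      fderiv_clm_apply (diffAt hf2 x) (diffAt he1 x)] at k1
    ext v
    have kv := DFunLike.congr_fun k1 v
    simp only [ContinuousLinearMap.add_apply, ContinuousLinearMap.comp_apply,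
      ContinuousLinearMap.flip_apply, ContinuousLinearMap.zero_apply] at kv
    simp only [dorfForm_apply, Pi.neg_apply, ContinuousLinearMap.neg_apply,
      ContinuousLinearMap.add_apply, ContinuousLinearMap.sub_apply,
      ContinuousLinearMap.comp_apply, ContinuousLinearMap.flip_apply]
    linarith

lemma dorf_neg_right (u w : (E → E) × (E → (E →L[ℝ] ℝ))) :
    dorf u (-w) = - dorf u w := by
  obtain ⟨W, ω⟩ := w
  unfold dorf
  rw [Prod.neg_mk, Prod.neg_mk]
  have hW : (-W) = fun y => -(W y) := rfl
  have hω : (-ω) = fun y => -(ω y) := rfl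
  refine Prod.ext ?_ ?_ <;> dsimp only
  · funext x
    simp only [vecBracket_apply, Pi.neg_apply, hW, fderiv_fun_neg, Pi.neg_apply,
      ContinuousLinearMap.neg_apply, map_neg]
    abel
  · funext x
    ext v
    simp only [dorfForm_apply, Pi.neg_apply, hW, hω, fderiv_fun_neg,
      ContinuousLinearMap.neg_apply, ContinuousLinearMap.add_apply,
      ContinuousLinearMap.sub_apply, ContinuousLinearMap.comp_apply,
      ContinuousLinearMap.flip_apply, map_neg]
    ring

lemma pairingTheta_symm (p q : (E → E) × (E → (E →L[ℝ] ℝ))) (x : E) :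
    pairingTheta p q x = pairingTheta q p x := add_comm _ _


theorem courant_jacobi_on_dirac_sections (e : Fin 3 → (E → E) × (E → (E →L[ℝ] ℝ)))
    (hsm : ∀ i, ContDiff ℝ (⊤ : ℕ∞) (e i).1 ∧ ContDiff ℝ (⊤ : ℕ∞) (e i).2)
    (hiso : ∀ i j, ∀ x : E, pairingTheta (e i) (e j) x = 0)
    (hbr : ∀ i j k, ∀ x : E, pairingTheta (courant (e i) (e j)) (e k) x = 0) :
    courant (courant (e 0) (e 1)) (e 2) + courant (courant (e 1) (e 2)) (e 0) +
      courant (courant (e 2) (e 0)) (e 1) = 0 := by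
  have cd : ∀ i j, courant (e i) (e j) = dorf (e i) (e j) := fun i j =>
    courant_eq_dorf (hsm i).1 (hsm i).2 (hsm j).1 (hsm j).2 (hiso i j)
  have dsm1 : ∀ i j, SM (dorf (e i) (e j)).1 := fun i j =>
    smooth_vecBracket (hsm i).1 (hsm j).1
  have dsm2 : ∀ i j, SM (dorf (e i) (e j)).2 := fun i j =>
    smooth_dorfForm (hsm i).1 (hsm i).2 (hsm j).1 (hsm j).2
  have hbr' : ∀ i j k, ∀ x : E, pairingTheta (dorf (e i) (e j)) (e k) x = 0 := by
    intro i j k x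
    rw [← cd i j]
    exact hbr i j k x
  have cd2 : ∀ i j k, courant (dorf (e i) (e j)) (e k) = dorf (dorf (e i) (e j)) (e k) :=
    fun i j k => courant_eq_dorf (dsm1 i j) (dsm2 i j) (hsm k).1 (hsm k).2 (hbr' i j k)
  rw [cd 0 1, cd 1 2, cd 2 0, cd2 0 1, cd2 1 2, cd2 2 0]
  have s1 : dorf (dorf (e 1) (e 2)) (e 0) = - dorf (e 0) (dorf (e 1) (e 2)) := by
    have h := dorf_skew (hsm 0).1 (hsm 0).2 (dsm1 1 2) (dsm2 1 2)
      (fun x => (pairingTheta_symm _ _ x).trans (hbr' 1 2 0 x))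
    exact h
  have s2 : dorf (dorf (e 2) (e 0)) (e 1) = - dorf (e 1) (dorf (e 2) (e 0)) := by
    have h := dorf_skew (hsm 1).1 (hsm 1).2 (dsm1 2 0) (dsm2 2 0)
      (fun x => (pairingTheta_symm _ _ x).trans (hbr' 2 0 1 x))
    exact h
  have s3 : dorf (e 2) (e 0) = - dorf (e 0) (e 2) :=
    dorf_skew (hsm 0).1 (hsm 0).2 (hsm 2).1 (hsm 2).2 (hiso 0 2)
  rw [s1, s2, s3, dorf_neg_right,
    dorf_leibniz (hsm 0).1 (hsm 0).2 (hsm 1).1 (hsm 1).2 (hsm 2).1 (hsm 2).2]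
  abel
end

section
/- Let E be a real normed vector space, let ω : E × E → ℝ be a continuous bilinear map with ω(u,v) = −ω(v,u), and suppose the map J : E → E' given by J(v) = ω(v,·) is a continuous linear equivalence (strong constant symplectic form). For a smooth 1-form α : E → E' define the vector field ♯α(x) = J⁻¹(α(x)), and for smooth 1-forms α, β define the bracket {α,β} = L_{♯α}β − L_{♯β}α + d(ω(♯α,♯β)), where ω(♯α,♯β) is the smooth function x ↦ ω(♯α(x), ♯β(x)). Then this bracket satisfies the Jacobi identity: for all smooth 1-forms α, β, γ, {{α,β},γ} + {{β,γ},α} + {{γ,α},β} = 0; hence the smooth 1-forms on E form a Lie algebra under {·,·}. -/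
/-!
STATEMENT 9: Let ω be a strong constant symplectic form on a real normed space E, with
associated continuous linear equivalence J : E ≃ E', J(v) = ω(v,·).  For smooth 1-forms
define ♯α(x) = J⁻¹(α(x)) and the bracket {α,β} = L_{♯α}β − L_{♯β}α + d(ω(♯α,♯β)).
Then the bracket satisfies the Jacobi identity
{{α,β},γ} + {{β,γ},α} + {{γ,α},β} = 0.
-/

variable {E : Type*} [NormedAddCommGroup E] [NormedSpace ℝ E]

/-- The vector field `♯α(x) = J⁻¹(α(x))` associated to a 1-form `α`. -/
noncomputable def sharp (J : E ≃L[ℝ] (E →L[ℝ] ℝ)) (α : E → (E →L[ℝ] ℝ)) : E → E :=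
  fun x => J.symm (α x)

/-- The bracket of 1-forms `{α,β} = L_{♯α}β − L_{♯β}α + d(ω(♯α,♯β))` induced by the
symplectic form `ω` (with musical isomorphism `J`). -/
noncomputable def oneFormBracket (ω : E →L[ℝ] E →L[ℝ] ℝ) (J : E ≃L[ℝ] (E →L[ℝ] ℝ))
    (α β : E → (E →L[ℝ] ℝ)) : E → (E →L[ℝ] ℝ) :=
  fun x => lieDeriv (sharp J α) β x - lieDeriv (sharp J β) α x +
    fderiv ℝ (fun y => ω (sharp J α y) (sharp J β y)) x

lemma sharp_hasFDerivAt (J : E ≃L[ℝ] (E →L[ℝ] ℝ)) {α : E → (E →L[ℝ] ℝ)} {x : E}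
    (hα : DifferentiableAt ℝ α x) :
    HasFDerivAt (sharp J α)
      (((J.symm : (E →L[ℝ] ℝ) →L[ℝ] E)).comp (fderiv ℝ α x)) x :=
  ((J.symm : (E →L[ℝ] ℝ) →L[ℝ] E).hasFDerivAt).comp x hα.hasFDerivAt

lemma bracket_eq (ω : E →L[ℝ] E →L[ℝ] ℝ) (hskew : ∀ u v : E, ω u v = - ω v u)
    (J : E ≃L[ℝ] (E →L[ℝ] ℝ)) (hJ : ∀ v : E, (J v : E →L[ℝ] ℝ) = ω v)
    (α β : E → (E →L[ℝ] ℝ)) (x : E)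
    (hα : DifferentiableAt ℝ α x) (hβ : DifferentiableAt ℝ β x) :
    oneFormBracket ω J α β x
      = fderiv ℝ β x (sharp J α x) - fderiv ℝ α x (sharp J β x) := by
  have hX := sharp_hasFDerivAt J hα
  have hY := sharp_hasFDerivAt J hβ
  have hωX : HasFDerivAt (fun y => (ω (sharp J α y) : E →L[ℝ] ℝ))
      (ω.comp ((J.symm : (E →L[ℝ] ℝ) →L[ℝ] E).comp (fderiv ℝ α x))) x :=
    (ω.hasFDerivAt).comp x hX
  have hh : HasFDerivAt (fun y => ω (sharp J α y) (sharp J β y))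
      ((ω (sharp J α x)).comp ((J.symm : (E →L[ℝ] ℝ) →L[ℝ] E).comp (fderiv ℝ β x)) +
        (ω.comp ((J.symm : (E →L[ℝ] ℝ) →L[ℝ] E).comp (fderiv ℝ α x))).flip (sharp J β x)) x :=
    hωX.clm_apply hY
  have hJX : (ω (sharp J α x) : E →L[ℝ] ℝ) = α x := by
    rw [← hJ]; simp [sharp]
  have hJY : (ω (sharp J β x) : E →L[ℝ] ℝ) = β x := by
    rw [← hJ]; simp [sharp]
  unfold oneFormBracket lieDeriv
  rw [hh.fderiv, hX.fderiv, hY.fderiv]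
  ext v
  simp only [ContinuousLinearMap.add_apply, ContinuousLinearMap.sub_apply,
    ContinuousLinearMap.comp_apply, ContinuousLinearMap.flip_apply, ContinuousLinearMap.coe_coe, ContinuousLinearEquiv.coe_coe]
  have h1 : β x (J.symm (fderiv ℝ α x v)) = - ω (J.symm (fderiv ℝ α x v)) (sharp J β x) := by
    rw [← hJY]; exact hskew _ _
  have h2 : α x (J.symm (fderiv ℝ β x v)) = ω (sharp J α x) (J.symm (fderiv ℝ β x v)) := by
    rw [← hJX]
  rw [h1, h2]
  ring

lemma g_contDiff (J : E ≃L[ℝ] (E →L[ℝ] ℝ)) {α β : E → (E →L[ℝ] ℝ)}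
    (hα : ContDiff ℝ (⊤ : ℕ∞) α) (hβ : ContDiff ℝ (⊤ : ℕ∞) β) :
    ContDiff ℝ (⊤ : ℕ∞) (fun y => fderiv ℝ β y (sharp J α y) - fderiv ℝ α y (sharp J β y)) := by
  have hsα : ContDiff ℝ (⊤ : ℕ∞) (sharp J α) :=
    (J.symm : (E →L[ℝ] ℝ) →L[ℝ] E).contDiff.comp hα
  have hsβ : ContDiff ℝ (⊤ : ℕ∞) (sharp J β) :=
    (J.symm : (E →L[ℝ] ℝ) →L[ℝ] E).contDiff.comp hβ
  exact ((hβ.fderiv_right (m := (⊤:ℕ∞)) (mod_cast le_top)).clm_apply hsα).sub ((hα.fderiv_right (m := (⊤:ℕ∞)) (mod_cast le_top)).clm_apply hsβ)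

lemma bracket2_apply (ω : E →L[ℝ] E →L[ℝ] ℝ) (hskew : ∀ u v : E, ω u v = - ω v u)
    (J : E ≃L[ℝ] (E →L[ℝ] ℝ)) (hJ : ∀ v : E, (J v : E →L[ℝ] ℝ) = ω v)
    (α β γ : E → (E →L[ℝ] ℝ))
    (hα : ContDiff ℝ (⊤ : ℕ∞) α) (hβ : ContDiff ℝ (⊤ : ℕ∞) β)
    (hγ : ContDiff ℝ (⊤ : ℕ∞) γ) (x v : E) :
    oneFormBracket ω J (oneFormBracket ω J α β) γ x v =
      fderiv ℝ γ x (J.symm (fderiv ℝ β x (J.symm (α x)))) v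
      - fderiv ℝ γ x (J.symm (fderiv ℝ α x (J.symm (β x)))) v
      - fderiv ℝ (fderiv ℝ β) x (J.symm (γ x)) (J.symm (α x)) v
      - fderiv ℝ β x (J.symm (fderiv ℝ α x (J.symm (γ x)))) v
      + fderiv ℝ (fderiv ℝ α) x (J.symm (γ x)) (J.symm (β x)) v
      + fderiv ℝ α x (J.symm (fderiv ℝ β x (J.symm (γ x)))) v := by
  set g := fun y => fderiv ℝ β y (sharp J α y) - fderiv ℝ α y (sharp J β y) with hg
  have hgc : ContDiff ℝ (⊤ : ℕ∞) g := g_contDiff J hα hβ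
  have hbg : oneFormBracket ω J α β = g := by
    funext y
    exact bracket_eq ω hskew J hJ α β y (hα.differentiable (by simp) y) (hβ.differentiable (by simp) y)
  rw [hbg, bracket_eq ω hskew J hJ g γ x (hgc.differentiable (by simp) x)
    (hγ.differentiable (by simp) x)]
  -- derivative of g at x
  have hX := sharp_hasFDerivAt J (hα.differentiable (by simp) x)
  have hY := sharp_hasFDerivAt J (hβ.differentiable (by simp) x)
  have hB : HasFDerivAt (fderiv ℝ β) (fderiv ℝ (fderiv ℝ β) x) x :=
    ((hβ.fderiv_right (m := (⊤:ℕ∞)) (mod_cast le_top)).differentiable (by simp) x).hasFDerivAt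
  have hA : HasFDerivAt (fderiv ℝ α) (fderiv ℝ (fderiv ℝ α) x) x :=
    ((hα.fderiv_right (m := (⊤:ℕ∞)) (mod_cast le_top)).differentiable (by simp) x).hasFDerivAt
  have hgd : HasFDerivAt g
      (((fderiv ℝ β x).comp ((J.symm : (E →L[ℝ] ℝ) →L[ℝ] E).comp (fderiv ℝ α x)) +
          (fderiv ℝ (fderiv ℝ β) x).flip (sharp J α x)) -
        ((fderiv ℝ α x).comp ((J.symm : (E →L[ℝ] ℝ) →L[ℝ] E).comp (fderiv ℝ β x)) +
          (fderiv ℝ (fderiv ℝ α) x).flip (sharp J β x))) x :=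
    (hB.clm_apply hX).sub (hA.clm_apply hY)
  rw [hgd.fderiv]
  have hgx : g x = fderiv ℝ β x (J.symm (α x)) - fderiv ℝ α x (J.symm (β x)) := rfl
  simp only [ContinuousLinearMap.sub_apply, ContinuousLinearMap.add_apply,
    ContinuousLinearMap.comp_apply, ContinuousLinearMap.flip_apply,
    ContinuousLinearEquiv.coe_coe, sharp, hgx, map_sub]
  ring

theorem oneFormBracket_jacobi
    (ω : E →L[ℝ] E →L[ℝ] ℝ) (hskew : ∀ u v : E, ω u v = - ω v u)
    (J : E ≃L[ℝ] (E →L[ℝ] ℝ)) (hJ : ∀ v : E, (J v : E →L[ℝ] ℝ) = ω v)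
    (α β γ : E → (E →L[ℝ] ℝ))
    (hα : ContDiff ℝ (⊤ : ℕ∞) α) (hβ : ContDiff ℝ (⊤ : ℕ∞) β)
    (hγ : ContDiff ℝ (⊤ : ℕ∞) γ) :
    oneFormBracket ω J (oneFormBracket ω J α β) γ +
      oneFormBracket ω J (oneFormBracket ω J β γ) α +
      oneFormBracket ω J (oneFormBracket ω J γ α) β = 0 := by
  funext x
  ext v
  have sym : ∀ (δ : E → (E →L[ℝ] ℝ)), ContDiff ℝ (⊤ : ℕ∞) δ → ∀ w z : E,
      fderiv ℝ (fderiv ℝ δ) x w z = fderiv ℝ (fderiv ℝ δ) x z w := by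
    intro δ hδ w z
    exact second_derivative_symmetric
      (fun y => ((hδ.differentiable (by simp)) y).hasFDerivAt)
      (((hδ.fderiv_right (m := (⊤:ℕ∞)) (mod_cast le_top)).differentiable
        (by simp) x).hasFDerivAt) w z
  have h1 := bracket2_apply ω hskew J hJ α β γ hα hβ hγ x v
  have h2 := bracket2_apply ω hskew J hJ β γ α hβ hγ hα x v
  have h3 := bracket2_apply ω hskew J hJ γ α β hγ hα hβ x v
  have eA : fderiv ℝ (fderiv ℝ α) x (J.symm (γ x)) (J.symm (β x)) v
      = fderiv ℝ (fderiv ℝ α) x (J.symm (β x)) (J.symm (γ x)) v := by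
    rw [sym α hα]
  have eB : fderiv ℝ (fderiv ℝ β) x (J.symm (γ x)) (J.symm (α x)) v
      = fderiv ℝ (fderiv ℝ β) x (J.symm (α x)) (J.symm (γ x)) v := by
    rw [sym β hβ]
  have eC : fderiv ℝ (fderiv ℝ γ) x (J.symm (α x)) (J.symm (β x)) v
      = fderiv ℝ (fderiv ℝ γ) x (J.symm (β x)) (J.symm (α x)) v := by
    rw [sym γ hγ]
  simp only [Pi.add_apply, Pi.zero_apply, ContinuousLinearMap.add_apply,
    ContinuousLinearMap.zero_apply]
  rw [h1, h2, h3]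
  linarith [eA, eB, eC]
end
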